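/- Let n ≥ 3 and d ≥ 1, and suppose there exists a linearly independent d-tuple (Y₁, …, Y_d) of Hermitian (n−1)×(n−1) complex matrices, each with all diagonal entries equal to zero, such that every diagonal unitary matrix D ∈ M_{n−1}(ℂ) satisfying D · span_ℂ(Y₁,…,Y_d) · Dᴴ = span_ℂ(Y₁,…,Y_d) is a scalar multiple of the identity. Then there exists a linearly independent (d+1)-tuple (X₁, …, X_{d+1}) of traceless Hermitian n×n complex matrices such that every unitary U ∈ Mₙ(ℂ) with U · span_ℂ(X₁,…,X_{d+1}) · Uᴴ = span_ℂ(X₁,…,X_{d+1}) is a scalar multiple of the identity. -/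

import Mathlib

open Matrix

namespace TSIS

variable (m : ℕ)

/-- the positive middle sum -/
noncomputable def possum : ℝ := ∑ j ∈ Finset.Ico 1 (m - 1), ((j : ℝ) + 2)

noncomputable def lamN : ℕ → ℝ := fun j =>
  if j = 0 then -1
  else if j = m then 1
  else if j < m - 1 then (j : ℝ) + 2
  else - possum m

noncomputable def lam : Fin (m + 1) → ℝ := fun k => lamN m k.val

variable {m}

lemma possum_ge (hm : 3 ≤ m) : 3 ≤ possum m := by
  have h1 : (1 : ℕ) ∈ Finset.Ico 1 (m - 1) := by
    simp [Finset.mem_Ico]; omega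
  have := Finset.single_le_sum (f := fun j : ℕ => (j : ℝ) + 2)
    (fun i _ => by positivity) h1
  simpa [possum] using this.trans_eq' (by norm_num)

lemma lamN_zero : lamN m 0 = -1 := by simp [lamN]

lemma lamN_m (hm : 3 ≤ m) : lamN m m = 1 := by
  simp [lamN]; omega

lemma lamN_mid_lt (j : ℕ) (h0 : j ≠ 0) (hlt : j < m - 1) : lamN m j = (j : ℝ) + 2 := by
  have : j ≠ m := by omega
  simp [lamN, h0, this, hlt]

lemma lamN_bal (hm : 3 ≤ m) : lamN m (m - 1) = - possum m := by
  have h0 : m - 1 ≠ 0 := by omega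
  have h1 : m - 1 ≠ m := by omega
  have h2 : ¬ (m - 1 < m - 1) := by omega
  simp [lamN, h0, h1, h2]

lemma lam_sum (hm : 3 ≤ m) : ∑ k, lam m k = 0 := by
  have h1 : ∑ k, lam m k = ∑ i ∈ Finset.range (m + 1), lamN m i := by
    simp only [lam]
    exact Fin.sum_univ_eq_sum_range (fun i => lamN m i) (m+1)
  rw [h1, Finset.sum_range_succ, lamN_m hm]
  have h2 : Finset.range m = Finset.Ico 0 m := by rw [Finset.range_eq_Ico]
  rw [h2]
  have h3 : ∑ i ∈ Finset.Ico 0 m, lamN m i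
      = (∑ i ∈ Finset.Ico 0 1, lamN m i) + ∑ i ∈ Finset.Ico 1 m, lamN m i := by
    rw [Finset.sum_Ico_consecutive] <;> omega
  have h4 : ∑ i ∈ Finset.Ico 1 m, lamN m i
      = (∑ i ∈ Finset.Ico 1 (m-1), lamN m i) + ∑ i ∈ Finset.Ico (m-1) m, lamN m i := by
    rw [Finset.sum_Ico_consecutive] <;> omega
  have h5 : ∑ i ∈ Finset.Ico 0 1, lamN m i = -1 := by
    simp [lamN_zero]
  have h6 : ∑ i ∈ Finset.Ico 1 (m-1), lamN m i = possum m := by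
    rw [possum]
    refine Finset.sum_congr rfl ?_
    intro j hj
    rw [Finset.mem_Ico] at hj
    exact lamN_mid_lt j (by omega) hj.2
  have h7 : ∑ i ∈ Finset.Ico (m-1) m, lamN m i = - possum m := by
    have hset : Finset.Ico (m-1) m = {m-1} := by
      have hm1 : m = (m - 1) + 1 := by omega
      rw [hm1]; simp
    rw [hset, Finset.sum_singleton]
    exact lamN_bal hm
  rw [h3, h4, h5, h6, h7]; ring

/-- middle index -/
def IsMid (k : Fin (m + 1)) : Prop := k ≠ 0 ∧ k ≠ Fin.last m

lemma lam_zero (hm : 3 ≤ m) : lam m 0 = -1 := by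
  simp [lam, lamN_zero]

lemma lam_last (hm : 3 ≤ m) : lam m (Fin.last m) = 1 := by
  simp [lam, Fin.val_last, lamN_m hm]

lemma mid_val {k : Fin (m + 1)} (hk : IsMid k) : k.val ≠ 0 ∧ k.val ≠ m := by
  constructor
  · intro h; exact hk.1 (Fin.ext h)
  · intro h; exact hk.2 (Fin.ext (by simp [Fin.val_last, h]))

lemma lam_mid_abs (hm : 3 ≤ m) {k : Fin (m + 1)} (hk : IsMid k) : 3 ≤ |lam m k| := by
  obtain ⟨h0, hmv⟩ := mid_val hk
  simp only [lam]
  by_cases hlt : k.val < m - 1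
  · rw [lamN_mid_lt k.val h0 hlt]
    have : (1:ℝ) ≤ (k.val : ℝ) := by
      have : 1 ≤ k.val := by omega
      exact_mod_cast this
    rw [abs_of_pos (by linarith)]; linarith
  · have hkv : k.val = m - 1 := by
      have := k.isLt; omega
    rw [hkv, lamN_bal hm, abs_neg, abs_of_pos (by linarith [possum_ge hm])]
    exact possum_ge hm

lemma lam_mid_sq (hm : 3 ≤ m) {k : Fin (m + 1)} (hk : IsMid k) : 9 ≤ (lam m k)^2 := by
  have := lam_mid_abs hm hk
  nlinarith [abs_nonneg (lam m k), sq_abs (lam m k)]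

lemma lam_mid_inj (hm : 3 ≤ m) {k l : Fin (m + 1)} (hk : IsMid k) (hl : IsMid l)
    (hne : k ≠ l) : lam m k ≠ lam m l := by
  obtain ⟨hk0, hkm⟩ := mid_val hk
  obtain ⟨hl0, hlm⟩ := mid_val hl
  have hvne : k.val ≠ l.val := fun h => hne (Fin.ext h)
  simp only [lam]
  by_cases h1 : k.val < m - 1 <;> by_cases h2 : l.val < m - 1
  · rw [lamN_mid_lt k.val hk0 h1, lamN_mid_lt l.val hl0 h2]
    intro h
    have : (k.val : ℝ) = l.val := by linarith
    exact hvne (by exact_mod_cast this)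
  · have hlv : l.val = m - 1 := by have := l.isLt; omega
    rw [lamN_mid_lt k.val hk0 h1, hlv, lamN_bal hm]
    have h3 := possum_ge hm
    have : (1:ℝ) ≤ (k.val:ℝ) := by exact_mod_cast Nat.one_le_iff_ne_zero.2 hk0
    intro h; linarith
  · have hkv : k.val = m - 1 := by have := k.isLt; omega
    rw [hkv, lamN_bal hm, lamN_mid_lt l.val hl0 h2]
    have h3 := possum_ge hm
    have : (1:ℝ) ≤ (l.val:ℝ) := by exact_mod_cast Nat.one_le_iff_ne_zero.2 hl0
    intro h; linarith
  · have : k.val = m - 1 := by have := k.isLt; omega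
    have h4 : l.val = m - 1 := by have := l.isLt; omega
    omega



/-! ### Matrices -/

variable (m) in
noncomputable def Amat : Matrix (Fin (m + 1)) (Fin (m + 1)) ℂ :=
  Matrix.of fun k l =>
    if k = l then (lam m k : ℂ)
    else if (k = 0 ∧ l = Fin.last m) ∨ (k = Fin.last m ∧ l = 0) then 1 else 0

lemma zero_ne_last (hm : 3 ≤ m) : (0 : Fin (m + 1)) ≠ Fin.last m := by
  intro h
  have := congrArg Fin.val h
  simp [Fin.val_last] at this
  omega

lemma Amat_diag (k : Fin (m + 1)) : Amat m k k = (lam m k : ℂ) := by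
  simp [Amat]

lemma Amat_0L (hm : 3 ≤ m) : Amat m 0 (Fin.last m) = 1 := by
  simp [Amat, zero_ne_last hm]

lemma Amat_L0 (hm : 3 ≤ m) : Amat m (Fin.last m) 0 = 1 := by
  simp [Amat, (zero_ne_last hm).symm]

lemma Amat_mid_row (hm : 3 ≤ m) {k : Fin (m + 1)} (hk : IsMid k) (l : Fin (m + 1)) :
    Amat m k l = if k = l then (lam m k : ℂ) else 0 := by
  by_cases h : k = l
  · simp [Amat, h]
  · have hc : ¬ ((k = 0 ∧ l = Fin.last m) ∨ (k = Fin.last m ∧ l = 0)) := by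
      rintro (⟨h1, _⟩ | ⟨h1, _⟩)
      · exact hk.1 h1
      · exact hk.2 h1
    simp only [Amat, Matrix.of_apply, if_neg h, if_neg hc]

lemma Amat_row_zero (hm : 3 ≤ m) (l : Fin (m + 1)) :
    Amat m 0 l = if l = 0 then (lam m 0 : ℂ) else if l = Fin.last m then 1 else 0 := by
  by_cases h0 : l = 0
  · simp [Amat, h0]
  · have h0' : (0 : Fin (m+1)) ≠ l := fun h => h0 h.symm
    by_cases hL : l = Fin.last m
    · simp only [Amat, Matrix.of_apply, if_neg h0', if_neg h0, if_pos hL]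
      simp [hL]
    · simp only [Amat, Matrix.of_apply, if_neg h0', if_neg h0, if_neg hL]
      simp [hL, zero_ne_last hm]

lemma Amat_row_last (hm : 3 ≤ m) (l : Fin (m + 1)) :
    Amat m (Fin.last m) l
      = if l = Fin.last m then (lam m (Fin.last m) : ℂ) else if l = 0 then 1 else 0 := by
  by_cases hL : l = Fin.last m
  · simp [Amat, hL]
  · have hL' : Fin.last m ≠ l := fun h => hL h.symm
    by_cases h0 : l = 0
    · simp only [Amat, Matrix.of_apply, if_neg hL', if_neg hL, if_pos h0]
      simp [h0, (zero_ne_last hm).symm]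
    · simp only [Amat, Matrix.of_apply, if_neg hL', if_neg hL, if_neg h0]
      simp [h0, hL, (zero_ne_last hm).symm]

lemma Amat_0_other (hm : 3 ≤ m) {l : Fin (m + 1)} (h0 : l ≠ 0) (hL : l ≠ Fin.last m) :
    Amat m 0 l = 0 := by
  rw [Amat_row_zero hm, if_neg h0, if_neg hL]

lemma Amat_L_other (hm : 3 ≤ m) {l : Fin (m + 1)} (h0 : l ≠ 0) (hL : l ≠ Fin.last m) :
    Amat m (Fin.last m) l = 0 := by
  rw [Amat_row_last hm, if_neg hL, if_neg h0]

lemma Amat_symm (k l : Fin (m + 1)) : Amat m k l = Amat m l k := by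
  by_cases h : k = l
  · simp [h]
  · have h' : ¬ l = k := fun hh => h hh.symm
    simp only [Amat, Matrix.of_apply, if_neg h, if_neg h']
    by_cases hc : (k = 0 ∧ l = Fin.last m) ∨ (k = Fin.last m ∧ l = 0)
    · have hc' : (l = 0 ∧ k = Fin.last m) ∨ (l = Fin.last m ∧ k = 0) := by tauto
      rw [if_pos hc, if_pos hc']
    · have hc' : ¬ ((l = 0 ∧ k = Fin.last m) ∨ (l = Fin.last m ∧ k = 0)) := by tauto
      rw [if_neg hc, if_neg hc']

lemma Amat_im (k l : Fin (m + 1)) : (Amat m k l).im = 0 := by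
  by_cases h : k = l
  · simp [Amat, h]
  · by_cases h2 : (k = 0 ∧ l = Fin.last m) ∨ (k = Fin.last m ∧ l = 0)
    · simp [Amat, h, h2]
    · simp [Amat, h, h2]

lemma Amat_herm (hm : 3 ≤ m) : (Amat m)ᴴ = Amat m := by
  ext k l
  rw [Matrix.conjTranspose_apply, Amat_symm]
  exact Complex.ext (by simp) (by simp [Amat_im])

/-- the diagonal of `A ^ 2` -/
noncomputable def wvec : Fin (m + 1) → ℝ := fun k =>
  (lam m k) ^ 2 + (if k = 0 ∨ k = Fin.last m then 1 else 0)

lemma wvec_ge (hm : 3 ≤ m) (k : Fin (m + 1)) : 2 ≤ wvec (m := m) k := by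
  by_cases h : k = 0 ∨ k = Fin.last m
  · have h1 : (lam m k)^2 = 1 := by
      rcases h with h | h
      · subst h; rw [lam_zero hm]; norm_num
      · subst h; rw [lam_last hm]; norm_num
    simp only [wvec, if_pos h, h1]
    norm_num
  · have hk : IsMid k := ⟨fun h0 => h (Or.inl h0), fun hL => h (Or.inr hL)⟩
    have := lam_mid_sq hm hk
    simp only [wvec, if_neg h]
    linarith

lemma wvec_last (hm : 3 ≤ m) : wvec (m := m) (Fin.last m) = 2 := by
  simp only [wvec, lam_last hm, if_pos (Or.inr rfl)]
  norm_num

lemma wvec_mid_ne (hm : 3 ≤ m) {k : Fin (m + 1)} (hk : IsMid k) :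
    wvec (m := m) k ≠ 2 := by
  have h : ¬ (k = 0 ∨ k = Fin.last m) := by
    rintro (h | h); exacts [hk.1 h, hk.2 h]
  have := lam_mid_sq hm hk
  simp only [wvec, if_neg h]
  intro hcon; linarith

lemma Amat_sq (hm : 3 ≤ m) :
    Amat m * Amat m = Matrix.diagonal (fun k => (wvec (m := m) k : ℂ)) := by
  have hlam0 : lam m 0 = -1 := lam_zero hm
  have hlamL : lam m (Fin.last m) = 1 := lam_last hm
  have h0L := zero_ne_last hm
  ext k l
  rw [Matrix.mul_apply]
  by_cases hk0 : k = 0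
  · subst hk0
    have hsupp : ∀ j ∈ Finset.univ, j ∉ ({0, Fin.last m} : Finset (Fin (m+1))) →
        Amat m 0 j * Amat m j l = 0 := by
      intro j _ hj
      simp only [Finset.mem_insert, Finset.mem_singleton, not_or] at hj
      rw [Amat_0_other hm hj.1 hj.2, zero_mul]
    rw [← Finset.sum_subset (Finset.subset_univ {0, Fin.last m}) hsupp,
      Finset.sum_pair h0L, Amat_diag, Amat_0L hm]
    by_cases hl0 : l = 0
    · subst hl0
      rw [Amat_diag, Amat_L0 hm, Matrix.diagonal_apply_eq]
      simp only [wvec, if_pos (Or.inl rfl)]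
      norm_num
      push_cast; ring
    · by_cases hlL : l = Fin.last m
      · subst hlL
        rw [Amat_0L hm, Amat_diag, Matrix.diagonal_apply_ne _ h0L, hlam0, hlamL]
        push_cast; ring
      · rw [Amat_0_other hm hl0 hlL, Amat_L_other hm hl0 hlL,
          Matrix.diagonal_apply_ne _ (fun h => hl0 h.symm)]
        ring
  · by_cases hkL : k = Fin.last m
    · subst hkL
      have hsupp : ∀ j ∈ Finset.univ, j ∉ ({0, Fin.last m} : Finset (Fin (m+1))) →
          Amat m (Fin.last m) j * Amat m j l = 0 := by
        intro j _ hj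
        simp only [Finset.mem_insert, Finset.mem_singleton, not_or] at hj
        rw [Amat_L_other hm hj.1 hj.2, zero_mul]
      rw [← Finset.sum_subset (Finset.subset_univ {0, Fin.last m}) hsupp,
        Finset.sum_pair h0L, Amat_L0 hm, Amat_diag]
      by_cases hl0 : l = 0
      · subst hl0
        rw [Amat_diag, Amat_L0 hm, Matrix.diagonal_apply_ne _ (fun h => h0L h.symm),
          hlam0, hlamL]
        push_cast; ring
      · by_cases hlL : l = Fin.last m
        · subst hlL
          rw [Amat_0L hm, Amat_diag, Matrix.diagonal_apply_eq]
          simp only [wvec, if_pos (Or.inr rfl), hlamL]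
          norm_num
        · rw [Amat_0_other hm hl0 hlL, Amat_L_other hm hl0 hlL,
            Matrix.diagonal_apply_ne _ (fun h => hlL h.symm)]
          ring
    · -- k is a middle index
      have hk : IsMid k := ⟨hk0, hkL⟩
      have hterm : ∀ j, Amat m k j * Amat m j l
          = if j = k then (lam m k : ℂ) * Amat m k l else 0 := by
        intro j
        rw [Amat_mid_row hm hk]
        by_cases h : k = j
        · subst h; simp
        · rw [if_neg h, if_neg (fun hh => h hh.symm), zero_mul]
      rw [Finset.sum_congr rfl (fun j _ => hterm j), Finset.sum_ite_eq' Finset.univ k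
        (fun _ => (lam m k : ℂ) * Amat m k l)]
      simp only [Finset.mem_univ, if_pos]
      by_cases hkl : k = l
      · subst hkl
        rw [Amat_diag, Matrix.diagonal_apply_eq]
        have hno : ¬ (k = 0 ∨ k = Fin.last m) := by rintro (h|h); exacts [hk0 h, hkL h]
        simp only [wvec, if_neg hno]
        push_cast; ring
      · rw [Amat_mid_row hm hk, if_neg hkl, mul_zero,
          Matrix.diagonal_apply_ne _ (fun h => hkl h)]

lemma Amat_trace (hm : 3 ≤ m) : (Amat m).trace = 0 := by
  rw [Matrix.trace]
  have : ∀ k, (Amat m).diag k = (lam m k : ℂ) := fun k => Amat_diag k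
  rw [Finset.sum_congr rfl (fun k _ => this k)]
  rw [← Complex.ofReal_sum, lam_sum hm, Complex.ofReal_zero]

/-! ### Embedding -/

variable (m) in
noncomputable def embL : Matrix (Fin m) (Fin m) ℂ →ₗ[ℂ] Matrix (Fin (m + 1)) (Fin (m + 1)) ℂ where
  toFun M := Matrix.of fun k l =>
    if hk : k = Fin.last m then 0
    else if hl : l = Fin.last m then 0
    else M (k.castPred hk) (l.castPred hl)
  map_add' M N := by
    ext k l
    simp only [Matrix.of_apply, Matrix.add_apply]
    split_ifs <;> simp
  map_smul' c M := by
    ext k l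
    simp only [Matrix.of_apply, Matrix.smul_apply, RingHom.id_apply]
    split_ifs <;> simp

lemma embL_last_left (M : Matrix (Fin m) (Fin m) ℂ) (l : Fin (m + 1)) :
    embL m M (Fin.last m) l = 0 := by
  simp [embL]

lemma embL_last_right (M : Matrix (Fin m) (Fin m) ℂ) (k : Fin (m + 1)) :
    embL m M k (Fin.last m) = 0 := by
  simp only [embL, LinearMap.coe_mk, AddHom.coe_mk, Matrix.of_apply]
  split_ifs <;> rfl

lemma embL_cast (M : Matrix (Fin m) (Fin m) ℂ) (k l : Fin m) :
    embL m M k.castSucc l.castSucc = M k l := by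
  have hk : k.castSucc ≠ Fin.last m := (Fin.castSucc_lt_last k).ne
  have hl : l.castSucc ≠ Fin.last m := (Fin.castSucc_lt_last l).ne
  simp [embL, hk, hl]

lemma embL_apply (M : Matrix (Fin m) (Fin m) ℂ) (k l : Fin (m + 1))
    (hk : k ≠ Fin.last m) (hl : l ≠ Fin.last m) :
    embL m M k l = M (k.castPred hk) (l.castPred hl) := by
  simp [embL, hk, hl]


/-! ### Sum helpers -/

lemma sum_two_support {ι : Type*} [Fintype ι] [DecidableEq ι] (f : ι → ℂ) (a b : ι)
    (hab : a ≠ b) (h : ∀ j, j ≠ a → j ≠ b → f j = 0) : ∑ j, f j = f a + f b := by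
  rw [← Finset.sum_subset (Finset.subset_univ {a, b})]
  · exact Finset.sum_pair hab
  · intro j _ hj
    simp only [Finset.mem_insert, Finset.mem_singleton, not_or] at hj
    exact h j hj.1 hj.2

lemma sum_one_support {ι : Type*} [Fintype ι] [DecidableEq ι] (f : ι → ℂ) (a : ι)
    (h : ∀ j, j ≠ a → f j = 0) : ∑ j, f j = f a := by
  rw [← Finset.sum_subset (Finset.subset_univ {a})]
  · exact Finset.sum_singleton f a
  · intro j _ hj
    simp only [Finset.mem_singleton] at hj
    exact h j hj

/-! ### Product entry lemmas -/

section prodentries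

variable (V : Matrix (Fin (m + 1)) (Fin (m + 1)) ℂ)

lemma Amul_mid (hm : 3 ≤ m) {k : Fin (m + 1)} (hk : IsMid k) (l : Fin (m + 1)) :
    (Amat m * V) k l = (lam m k : ℂ) * V k l := by
  rw [Matrix.mul_apply]
  rw [sum_one_support _ k (fun j hj => by
    rw [Amat_mid_row hm hk, if_neg (fun h => hj h.symm), zero_mul])]
  rw [Amat_diag]

lemma Amul_zero (hm : 3 ≤ m) (l : Fin (m + 1)) :
    (Amat m * V) 0 l = (lam m 0 : ℂ) * V 0 l + V (Fin.last m) l := by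
  rw [Matrix.mul_apply]
  rw [sum_two_support _ 0 (Fin.last m) (zero_ne_last hm) (fun j hj0 hjL => by
    rw [Amat_0_other hm hj0 hjL, zero_mul])]
  rw [Amat_diag, Amat_0L hm, one_mul]

lemma Amul_last (hm : 3 ≤ m) (l : Fin (m + 1)) :
    (Amat m * V) (Fin.last m) l = V 0 l + (lam m (Fin.last m) : ℂ) * V (Fin.last m) l := by
  rw [Matrix.mul_apply]
  rw [sum_two_support _ 0 (Fin.last m) (zero_ne_last hm) (fun j hj0 hjL => by
    rw [Amat_L_other hm hj0 hjL, zero_mul])]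
  rw [Amat_diag, Amat_L0 hm, one_mul]

lemma mulA_mid (hm : 3 ≤ m) {j : Fin (m + 1)} (hj : IsMid j) (k : Fin (m + 1)) :
    (V * Amat m) k j = V k j * (lam m j : ℂ) := by
  rw [Matrix.mul_apply]
  rw [sum_one_support _ j (fun l hl => by
    rw [Amat_symm, Amat_mid_row hm hj, if_neg (fun h => hl h.symm), mul_zero])]
  rw [Amat_diag]

lemma mulA_zero (hm : 3 ≤ m) (k : Fin (m + 1)) :
    (V * Amat m) k 0 = V k 0 * (lam m 0 : ℂ) + V k (Fin.last m) := by
  rw [Matrix.mul_apply]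
  rw [sum_two_support _ 0 (Fin.last m) (zero_ne_last hm) (fun l hl0 hlL => by
    rw [Amat_symm, Amat_0_other hm hl0 hlL, mul_zero])]
  rw [Amat_diag, Amat_symm, Amat_0L hm, mul_one]

lemma mulA_last (hm : 3 ≤ m) (k : Fin (m + 1)) :
    (V * Amat m) k (Fin.last m) = V k 0 + V k (Fin.last m) * (lam m (Fin.last m) : ℂ) := by
  rw [Matrix.mul_apply]
  rw [sum_two_support _ 0 (Fin.last m) (zero_ne_last hm) (fun l hl0 hlL => by
    rw [Amat_symm, Amat_L_other hm hl0 hlL, mul_zero])]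
  rw [Amat_diag, Amat_symm, Amat_L0 hm, mul_one]

end prodentries


/-! ### The family X -/

variable (m) in
noncomputable def Xfam (d : ℕ) (Y : Fin d → Matrix (Fin m) (Fin m) ℂ) :
    Fin (d + 1) → Matrix (Fin (m + 1)) (Fin (m + 1)) ℂ :=
  Fin.snoc (fun i => embL m (Y i)) (Amat m)

lemma Xfam_cast {d : ℕ} (Y : Fin d → Matrix (Fin m) (Fin m) ℂ) (i : Fin d) :
    Xfam m d Y i.castSucc = embL m (Y i) := by
  simp [Xfam]

lemma Xfam_last {d : ℕ} (Y : Fin d → Matrix (Fin m) (Fin m) ℂ) :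
    Xfam m d Y (Fin.last d) = Amat m := by
  simp [Xfam]

lemma colN {d : ℕ} (Y : Fin d → Matrix (Fin m) (Fin m) ℂ) (a : Fin (d + 1) → ℂ)
    (k : Fin (m + 1)) :
    (∑ j, a j • Xfam m d Y j) k (Fin.last m)
      = a (Fin.last d) * Amat m k (Fin.last m) := by
  rw [Matrix.sum_apply]
  rw [Fin.sum_univ_castSucc]
  have h1 : ∀ i : Fin d, (a i.castSucc • Xfam m d Y i.castSucc) k (Fin.last m) = 0 := by
    intro i
    rw [Matrix.smul_apply, Xfam_cast, embL_last_right, smul_zero]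
  rw [Finset.sum_congr rfl (fun i _ => h1 i), Finset.sum_const_zero, zero_add,
    Matrix.smul_apply, Xfam_last, smul_eq_mul]

/-! ### unitary column relations -/

lemma ucols {U : Matrix (Fin (m + 1)) (Fin (m + 1)) ℂ} (hU1 : U * Uᴴ = 1)
    (l l' : Fin (m + 1)) :
    ∑ k, (starRingEnd ℂ) (Uᴴ k l) * Uᴴ k l' = if l = l' then 1 else 0 := by
  have h := congrFun (congrFun hU1 l) l'
  rw [Matrix.mul_apply] at h
  have h2 : ∀ k, U l k = (starRingEnd ℂ) (Uᴴ k l) := by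
    intro k
    rw [Matrix.conjTranspose_apply]
    simp
  rw [Finset.sum_congr rfl (fun k _ => by rw [← h2 k])]
  rw [h, Matrix.one_apply]

lemma ucols_normSq {U : Matrix (Fin (m + 1)) (Fin (m + 1)) ℂ} (hU1 : U * Uᴴ = 1)
    (l : Fin (m + 1)) :
    ∑ k, Complex.normSq (Uᴴ k l) = 1 := by
  have h := ucols hU1 l l
  rw [if_pos rfl] at h
  have h2 : ∀ k, (starRingEnd ℂ) (Uᴴ k l) * Uᴴ k l = (Complex.normSq (Uᴴ k l) : ℂ) := by
    intro k
    rw [mul_comm, Complex.mul_conj]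
  rw [Finset.sum_congr rfl (fun k _ => h2 k), ← Complex.ofReal_sum] at h
  exact_mod_cast h

/-! ### Key step: the coefficient of `A` in `U A Uᴴ` is `±1`. -/

lemma c_pm_one {d : ℕ} (hm : 3 ≤ m) (Y : Fin d → Matrix (Fin m) (Fin m) ℂ)
    (hdiag : ∀ i k, Y i k k = 0)
    (U : Matrix (Fin (m + 1)) (Fin (m + 1)) ℂ)
    (hU1 : U * Uᴴ = 1) (hU2 : Uᴴ * U = 1)
    (a : Fin (d + 1) → ℂ)
    (ha : ∑ j, a j • Xfam m d Y j = U * Amat m * Uᴴ) :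
    U * Amat m * Uᴴ = a (Fin.last d) • Amat m ∧
      (a (Fin.last d) = 1 ∨ a (Fin.last d) = -1) := by
  set c := a (Fin.last d) with hc
  have hlam0 : lam m 0 = -1 := lam_zero hm
  have hlamLC : (lam m (Fin.last m) : ℂ) = 1 := by rw [lam_last hm]; norm_num
  have hlam0C : (lam m 0 : ℂ) = -1 := by rw [hlam0]; push_cast; ring
  have hBcol : ∀ k, (U * Amat m * Uᴴ) k (Fin.last m) = c * Amat m k (Fin.last m) := by
    intro k
    rw [← ha]
    exact colN Y a k
  -- transfer to `A * Uᴴ`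
  have h5 : Amat m * Uᴴ = Uᴴ * (U * Amat m * Uᴴ) := by
    rw [← Matrix.mul_assoc, ← Matrix.mul_assoc, hU2, Matrix.one_mul]
  have hAUcol : ∀ k, (Amat m * Uᴴ) k (Fin.last m) = c * (Uᴴ * Amat m) k (Fin.last m) := by
    intro k
    rw [h5, Matrix.mul_apply]
    rw [Finset.sum_congr rfl (fun j _ => by rw [hBcol j])]
    rw [Matrix.mul_apply, Finset.mul_sum]
    exact Finset.sum_congr rfl (fun j _ => by ring)
  -- the entries of `Uᴴ * A` in column `(Fin.last m)`
  have hUAL : ∀ k, (Uᴴ * Amat m) k (Fin.last m) = Uᴴ k 0 + Uᴴ k (Fin.last m) := by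
    intro k
    rw [mulA_last _ hm k, hlamLC, mul_one]
  -- norm computations
  have hsum2 : ∑ k, Complex.normSq (Uᴴ k 0 + Uᴴ k (Fin.last m)) = 2 := by
    have hadd : ∀ k, Complex.normSq (Uᴴ k 0 + Uᴴ k (Fin.last m))
        = Complex.normSq (Uᴴ k 0) + Complex.normSq (Uᴴ k (Fin.last m))
          + 2 * (Uᴴ k 0 * (starRingEnd ℂ) (Uᴴ k (Fin.last m))).re := by
      intro k; exact Complex.normSq_add _ _
    rw [Finset.sum_congr rfl (fun k _ => hadd k)]
    rw [Finset.sum_add_distrib, Finset.sum_add_distrib]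
    have e1 : ∑ k, Complex.normSq (Uᴴ k 0) = 1 := ucols_normSq hU1 0
    have e2 : ∑ k, Complex.normSq (Uᴴ k (Fin.last m)) = 1 := ucols_normSq hU1 (Fin.last m)
    have e3 : ∑ k, 2 * (Uᴴ k 0 * (starRingEnd ℂ) (Uᴴ k (Fin.last m))).re = 0 := by
      have h0 : ∑ k, (starRingEnd ℂ) (Uᴴ k (Fin.last m)) * Uᴴ k 0 = 0 := by
        have := ucols hU1 (Fin.last m) 0
        rw [if_neg (Ne.symm (zero_ne_last hm))] at this
        exact this
      have h1 : (∑ k, (starRingEnd ℂ) (Uᴴ k (Fin.last m)) * Uᴴ k 0).re = 0 := by rw [h0]; simp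
      rw [Complex.re_sum] at h1
      rw [← Finset.mul_sum]
      rw [Finset.sum_congr rfl (fun k _ => by rw [mul_comm (Uᴴ k 0)])]
      rw [h1, mul_zero]
    rw [e1, e2, e3]; norm_num
  -- identify the two sides
  have hS1a : ∑ k, Complex.normSq ((Amat m * Uᴴ) k (Fin.last m)) = Complex.normSq c * 2 := by
    rw [Finset.sum_congr rfl (fun k _ => by
      rw [hAUcol k, hUAL k, Complex.normSq_mul])]
    rw [← Finset.mul_sum, hsum2]
  -- pointwise values of `(A * Uᴴ) k (Fin.last m)`
  have hval0 : (Amat m * Uᴴ) 0 (Fin.last m) = - Uᴴ 0 (Fin.last m) + Uᴴ (Fin.last m) (Fin.last m) := by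
    rw [Amul_zero _ hm (Fin.last m), hlam0C]; ring_nf
  have hvalL : (Amat m * Uᴴ) (Fin.last m) (Fin.last m) = Uᴴ 0 (Fin.last m) + Uᴴ (Fin.last m) (Fin.last m) := by
    have : (Amat m * Uᴴ) (Fin.last m) (Fin.last m) = Uᴴ 0 (Fin.last m) + (lam m (Fin.last m) : ℂ) * Uᴴ (Fin.last m) (Fin.last m) := Amul_last _ hm (Fin.last m)
    rw [this, hlamLC, one_mul]
  have hvalmid : ∀ k, IsMid k → (Amat m * Uᴴ) k (Fin.last m) = (lam m k : ℂ) * Uᴴ k (Fin.last m) := by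
    intro k hk
    exact Amul_mid _ hm hk (Fin.last m)
  -- split the sums over {0, (Fin.last m)} and the rest
  have hsplit : ∀ g : Fin (m + 1) → ℝ,
      ∑ k, g k = g 0 + g (Fin.last m) + ∑ k ∈ Finset.univ \ {0, (Fin.last m)}, g k := by
    intro g
    have h := Finset.sum_sdiff (f := g) (Finset.subset_univ ({0, (Fin.last m)} : Finset (Fin (m+1))))
    rw [Finset.sum_pair (zero_ne_last hm)] at h
    linarith
  have hmid_of_mem : ∀ k : Fin (m + 1), k ∈ Finset.univ \ ({0, (Fin.last m)} : Finset (Fin (m+1))) →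
      IsMid k := by
    intro k hk
    simp only [Finset.mem_sdiff, Finset.mem_insert, Finset.mem_singleton, not_or] at hk
    exact ⟨hk.2.1, hk.2.2⟩
  have husum : ∑ k, Complex.normSq (Uᴴ k (Fin.last m)) = 1 := ucols_normSq hU1 (Fin.last m)
  -- lower bound
  have hge : (2 : ℝ) ≤ Complex.normSq c * 2 := by
    rw [← hS1a]
    rw [hsplit (fun k => Complex.normSq ((Amat m * Uᴴ) k (Fin.last m)))]
    rw [hsplit (fun k => Complex.normSq (Uᴴ k (Fin.last m)))] at husum
    have hpair : Complex.normSq ((Amat m * Uᴴ) 0 (Fin.last m)) + Complex.normSq ((Amat m * Uᴴ) (Fin.last m) (Fin.last m))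
        = 2 * Complex.normSq (Uᴴ 0 (Fin.last m)) + 2 * Complex.normSq (Uᴴ (Fin.last m) (Fin.last m)) := by
      rw [hval0, hvalL]
      simp only [Complex.normSq_apply, Complex.add_re, Complex.add_im, Complex.neg_re,
        Complex.neg_im]
      ring
    have hrest : ∑ k ∈ Finset.univ \ ({0, (Fin.last m)} : Finset (Fin (m+1))),
        Complex.normSq (Uᴴ k (Fin.last m)) * 2 ≤
        ∑ k ∈ Finset.univ \ ({0, (Fin.last m)} : Finset (Fin (m+1))),
        Complex.normSq ((Amat m * Uᴴ) k (Fin.last m)) := by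
      apply Finset.sum_le_sum
      intro k hk
      have hmidk := hmid_of_mem k hk
      rw [hvalmid k hmidk, Complex.normSq_mul, Complex.normSq_ofReal]
      have h9 := lam_mid_sq hm hmidk
      have hnn := Complex.normSq_nonneg (Uᴴ k (Fin.last m))
      nlinarith
    have hRR : (∑ k ∈ Finset.univ \ ({0, Fin.last m} : Finset (Fin (m+1))),
        Complex.normSq (Uᴴ k (Fin.last m))) * 2
        = ∑ k ∈ Finset.univ \ ({0, Fin.last m} : Finset (Fin (m+1))),
          Complex.normSq (Uᴴ k (Fin.last m)) * 2 := Finset.sum_mul _ _ _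
    linarith
  have hc1 : 1 ≤ Complex.normSq c := by linarith
  -- trace computation
  set Z : Matrix (Fin (m+1)) (Fin (m+1)) ℂ := ∑ i : Fin d, a i.castSucc • embL m (Y i)
    with hZ
  have hBZ : U * Amat m * Uᴴ = Z + c • Amat m := by
    rw [← ha, Fin.sum_univ_castSucc]
    congr 1
    · exact Finset.sum_congr rfl (fun i _ => by rw [Xfam_cast])
    · rw [Xfam_last]
  have hZdiag : ∀ k, Z k k = 0 := by
    intro k
    rw [hZ, Matrix.sum_apply]
    apply Finset.sum_eq_zero
    intro i _
    rw [Matrix.smul_apply]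
    by_cases hkL : k = (Fin.last m)
    · rw [hkL, embL_last_left, smul_zero]
    · rw [embL_apply _ _ _ hkL hkL, hdiag, smul_zero]
  have hZcolL : ∀ k, Z k (Fin.last m) = 0 := by
    intro k
    rw [hZ, Matrix.sum_apply]
    apply Finset.sum_eq_zero
    intro i _
    rw [Matrix.smul_apply, embL_last_right, smul_zero]
  have hZrowL : ∀ l, Z (Fin.last m) l = 0 := by
    intro l
    rw [hZ, Matrix.sum_apply]
    apply Finset.sum_eq_zero
    intro i _
    rw [Matrix.smul_apply, embL_last_left, smul_zero]
  -- trace of A * W vanishes for such W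
  have htrAW : ∀ W : Matrix (Fin (m+1)) (Fin (m+1)) ℂ,
      (∀ k, W k k = 0) → (∀ k, W k (Fin.last m) = 0) → (∀ l, W (Fin.last m) l = 0) →
      (Amat m * W).trace = 0 := by
    intro W hWd hWc hWr
    rw [Matrix.trace]
    apply Finset.sum_eq_zero
    intro k _
    rw [Matrix.diag]
    by_cases hk0 : k = 0
    · rw [hk0, Amul_zero _ hm 0, hWd 0, mul_zero, zero_add]
      exact hWr 0
    · by_cases hkL : k = (Fin.last m)
      · rw [hkL, Amul_last _ hm (Fin.last m), hWd (Fin.last m), mul_zero, add_zero]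
        exact hWc 0
      · rw [Amul_mid _ hm ⟨hk0, hkL⟩, hWd k, mul_zero]
  have htrAZ : (Amat m * Z).trace = 0 := htrAW Z hZdiag hZcolL hZrowL
  have htrZA : (Z * Amat m).trace = 0 := by
    rw [Matrix.trace_mul_comm]; exact htrAZ
  have htrZHA : ((Zᴴ : Matrix _ _ ℂ) * Amat m).trace = 0 := by
    rw [Matrix.trace_mul_comm]
    apply htrAW
    · intro k; rw [Matrix.conjTranspose_apply, hZdiag]; simp
    · intro k; rw [Matrix.conjTranspose_apply, hZrowL]; simp
    · intro l; rw [Matrix.conjTranspose_apply, hZcolL]; simp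
  -- the trace identity
  have hBh : (U * Amat m * Uᴴ)ᴴ = U * Amat m * Uᴴ := by
    rw [Matrix.conjTranspose_mul, Matrix.conjTranspose_mul, Matrix.conjTranspose_conjTranspose,
      Amat_herm hm, Matrix.mul_assoc]
  have htrB : ((U * Amat m * Uᴴ)ᴴ * (U * Amat m * Uᴴ)).trace = (Amat m * Amat m).trace := by
    rw [hBh]
    have heq2 : U * Amat m * Uᴴ * (U * Amat m * Uᴴ) = U * (Amat m * Amat m) * Uᴴ := by
      calc U * Amat m * Uᴴ * (U * Amat m * Uᴴ)
          = U * Amat m * (Uᴴ * U) * (Amat m * Uᴴ) := by simp [Matrix.mul_assoc]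
        _ = U * (Amat m * Amat m) * Uᴴ := by rw [hU2]; simp [Matrix.mul_assoc]
    rw [heq2, Matrix.trace_mul_cycle, ← Matrix.mul_assoc, hU2, Matrix.one_mul]
  set T : ℝ := ∑ k, wvec (m := m) k with hT
  have htrAA : (Amat m * Amat m).trace = (T : ℂ) := by
    rw [Amat_sq hm, Matrix.trace_diagonal, hT, Complex.ofReal_sum]
  set NZ : ℝ := ∑ k, ∑ j, Complex.normSq (Z j k) with hNZ
  have htrZZ : ((Zᴴ : Matrix _ _ ℂ) * Z).trace = (NZ : ℂ) := by
    rw [Matrix.trace, hNZ, Complex.ofReal_sum]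
    apply Finset.sum_congr rfl
    intro k _
    rw [Matrix.diag, Matrix.mul_apply, Complex.ofReal_sum]
    apply Finset.sum_congr rfl
    intro j _
    rw [Matrix.conjTranspose_apply]
    rw [Complex.star_def, Complex.normSq_eq_conj_mul_self]
  have hexpand : ((U * Amat m * Uᴴ)ᴴ * (U * Amat m * Uᴴ)).trace
      = (NZ : ℂ) + ((starRingEnd ℂ) c * c) * (T : ℂ) := by
    rw [hBZ]
    rw [Matrix.conjTranspose_add, Matrix.conjTranspose_smul, Amat_herm hm]
    rw [Matrix.add_mul, Matrix.mul_add, Matrix.mul_add]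
    rw [Matrix.trace_add, Matrix.trace_add, Matrix.trace_add]
    rw [Matrix.smul_mul, Matrix.mul_smul, Matrix.mul_smul, Matrix.smul_mul]
    rw [Matrix.trace_smul, Matrix.trace_smul, Matrix.trace_smul, Matrix.trace_smul]
    rw [htrZZ, htrZHA, htrAZ, htrAA]
    rw [smul_smul]
    simp only [smul_zero, smul_eq_mul, Complex.star_def]
    ring
  have heq : (T : ℂ) = (NZ : ℂ) + ((Complex.normSq c : ℝ) : ℂ) * (T : ℂ) := by
    have h := htrB
    rw [hexpand, htrAA, mul_comm ((starRingEnd ℂ) c) c, Complex.mul_conj] at h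
    exact h.symm
  have heqR : T = NZ + Complex.normSq c * T := by
    exact_mod_cast heq
  have hTpos : 0 < T := by
    rw [hT]
    apply Finset.sum_pos
    · intro k _
      have := wvec_ge hm k
      linarith
    · exact Finset.univ_nonempty
  have hNZnn : 0 ≤ NZ := by
    rw [hNZ]
    apply Finset.sum_nonneg
    intro k _
    apply Finset.sum_nonneg
    intro j _
    exact Complex.normSq_nonneg _
  have hNZ0 : NZ = 0 := by nlinarith
  have hnc1 : Complex.normSq c = 1 := by
    have : (1 - Complex.normSq c) * T = 0 := by linarith
    rcases mul_eq_zero.1 this with h | h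
    · linarith
    · exact absurd h (ne_of_gt hTpos)
  have hZzero : Z = 0 := by
    ext j k
    have h1 : ∑ j, Complex.normSq (Z j k) = 0 ∨ True := Or.inr trivial
    have hk : ∀ k' ∈ Finset.univ, (0:ℝ) ≤ ∑ j, Complex.normSq (Z j k') :=
      fun k' _ => Finset.sum_nonneg (fun j _ => Complex.normSq_nonneg _)
    have h2 := (Finset.sum_eq_zero_iff_of_nonneg hk).1 hNZ0.symm.symm
    have h3 := h2 k (Finset.mem_univ k)
    have hj : ∀ j' ∈ Finset.univ, (0:ℝ) ≤ Complex.normSq (Z j' k) :=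
      fun j' _ => Complex.normSq_nonneg _
    have h4 := (Finset.sum_eq_zero_iff_of_nonneg hj).1 h3 j (Finset.mem_univ j)
    rw [Matrix.zero_apply]
    exact Complex.normSq_eq_zero.1 h4
  have hBfin : U * Amat m * Uᴴ = c • Amat m := by
    rw [hBZ, hZzero, zero_add]
  -- c is real
  have hcreal : (starRingEnd ℂ) c = c := by
    have h1 : (c • Amat m)ᴴ = c • Amat m := by rw [← hBfin]; exact hBh
    rw [Matrix.conjTranspose_smul, Amat_herm hm] at h1
    have h2 := congrFun (congrFun h1 (Fin.last m)) (Fin.last m)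
    rw [Matrix.smul_apply, Matrix.smul_apply, Amat_diag, hlamLC] at h2
    simpa using h2
  have hcc : c * c = 1 := by
    have := Complex.mul_conj c
    rw [hcreal, hnc1] at this
    simpa using this
  exact ⟨hBfin, mul_self_eq_one_iff.1 hcc⟩


/-! ### conjugation preserves the span -/

lemma image_span_conj {d : ℕ} (Y : Fin d → Matrix (Fin m) (Fin m) ℂ)
    (D Dinv : Matrix (Fin m) (Fin m) ℂ) (h1 : D * Dinv = 1) (h2 : Dinv * D = 1)
    (hmem : ∀ i, D * Y i * Dᴴ ∈ Submodule.span ℂ (Set.range Y)) :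
    (fun x => D * x * Dᴴ) ''
        (Submodule.span ℂ (Set.range Y) : Set (Matrix (Fin m) (Fin m) ℂ))
      = (Submodule.span ℂ (Set.range Y) : Set (Matrix (Fin m) (Fin m) ℂ)) := by
  have hadj1 : Dᴴ * Dinvᴴ = 1 := by
    rw [← Matrix.conjTranspose_mul, h2, Matrix.conjTranspose_one]
  have hadj2 : Dinvᴴ * Dᴴ = 1 := by
    rw [← Matrix.conjTranspose_mul, h1, Matrix.conjTranspose_one]
  let f : Matrix (Fin m) (Fin m) ℂ →ₗ[ℂ] Matrix (Fin m) (Fin m) ℂ :=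
    { toFun := fun x => D * x * Dᴴ
      map_add' := fun x y => by rw [Matrix.mul_add, Matrix.add_mul]
      map_smul' := fun cc x => by
        simp only [RingHom.id_apply]; rw [Matrix.mul_smul, Matrix.smul_mul] }
  let g : Matrix (Fin m) (Fin m) ℂ →ₗ[ℂ] Matrix (Fin m) (Fin m) ℂ :=
    { toFun := fun x => Dinv * x * Dinvᴴ
      map_add' := fun x y => by rw [Matrix.mul_add, Matrix.add_mul]
      map_smul' := fun cc x => by
        simp only [RingHom.id_apply]; rw [Matrix.mul_smul, Matrix.smul_mul] }
  have hfg : f.comp g = LinearMap.id := by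
    apply LinearMap.ext
    intro x
    simp only [LinearMap.comp_apply, LinearMap.coe_mk, AddHom.coe_mk, LinearMap.id_apply, f, g]
    calc D * (Dinv * x * Dinvᴴ) * Dᴴ = (D * Dinv) * x * (Dinvᴴ * Dᴴ) := by
          simp [Matrix.mul_assoc]
      _ = x := by rw [h1, hadj2, Matrix.one_mul, Matrix.mul_one]
  have hgf : g.comp f = LinearMap.id := by
    apply LinearMap.ext
    intro x
    simp only [LinearMap.comp_apply, LinearMap.coe_mk, AddHom.coe_mk, LinearMap.id_apply, f, g]
    calc Dinv * (D * x * Dᴴ) * Dinvᴴ = (Dinv * D) * x * (Dᴴ * Dinvᴴ) := by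
          simp [Matrix.mul_assoc]
      _ = x := by rw [h2, hadj1, Matrix.one_mul, Matrix.mul_one]
  let ψ : Matrix (Fin m) (Fin m) ℂ ≃ₗ[ℂ] Matrix (Fin m) (Fin m) ℂ :=
    LinearEquiv.ofLinear f g hfg hgf
  set V := Submodule.span ℂ (Set.range Y) with hV
  have hle : Submodule.map (ψ : Matrix (Fin m) (Fin m) ℂ →ₗ[ℂ] Matrix (Fin m) (Fin m) ℂ) V
      ≤ V := by
    rw [hV, Submodule.map_span, Submodule.span_le]
    rintro z ⟨y, ⟨i, rfl⟩, rfl⟩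
    exact hmem i
  have hfr : Module.finrank ℂ
        (Submodule.map (ψ : Matrix (Fin m) (Fin m) ℂ →ₗ[ℂ] Matrix (Fin m) (Fin m) ℂ) V)
      = Module.finrank ℂ V := LinearEquiv.finrank_map_eq ψ V
  have hEq : Submodule.map (ψ : Matrix (Fin m) (Fin m) ℂ →ₗ[ℂ] Matrix (Fin m) (Fin m) ℂ) V
      = V := Submodule.eq_of_le_of_finrank_le hle (le_of_eq hfr.symm)
  have hset : (fun x => D * x * Dᴴ) '' (V : Set (Matrix (Fin m) (Fin m) ℂ))
      = (Submodule.map (ψ : Matrix (Fin m) (Fin m) ℂ →ₗ[ℂ] Matrix (Fin m) (Fin m) ℂ) V :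
          Set (Matrix (Fin m) (Fin m) ℂ)) := by
    rw [Submodule.map_coe]
    rfl
  rw [hset, hEq]


/-! ### main rigidity -/

lemma main_rigidity {d : ℕ} (hm : 3 ≤ m) (Y : Fin d → Matrix (Fin m) (Fin m) ℂ)
    (hherm : ∀ i, (Y i).IsHermitian) (hdiag : ∀ i k, Y i k k = 0)
    (hrig : ∀ D : Matrix (Fin m) (Fin m) ℂ,
      (∀ k l, k ≠ l → D k l = 0) → (∀ k, ‖D k k‖ = 1) →
      (fun x => D * x * Dᴴ) ''
          (Submodule.span ℂ (Set.range Y) : Set (Matrix (Fin m) (Fin m) ℂ))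
        = (Submodule.span ℂ (Set.range Y) : Set (Matrix (Fin m) (Fin m) ℂ)) →
      ∃ c : ℂ, D = c • (1 : Matrix (Fin m) (Fin m) ℂ))
    (U : Matrix (Fin (m + 1)) (Fin (m + 1)) ℂ)
    (hU : U ∈ Matrix.unitaryGroup (Fin (m + 1)) ℂ)
    (himg : (fun x => U * x * Uᴴ) ''
          (Submodule.span ℂ (Set.range (Xfam m d Y)) :
            Set (Matrix (Fin (m + 1)) (Fin (m + 1)) ℂ))
        = (Submodule.span ℂ (Set.range (Xfam m d Y)) :
            Set (Matrix (Fin (m + 1)) (Fin (m + 1)) ℂ))) :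
    ∃ c : ℂ, U = c • (1 : Matrix (Fin (m + 1)) (Fin (m + 1)) ℂ) := by
  haveI : NeZero m := ⟨by omega⟩
  have hU1 : U * Uᴴ = 1 := by
    have := (Matrix.mem_unitaryGroup_iff).1 hU
    rwa [Matrix.star_eq_conjTranspose] at this
  have hU2 : Uᴴ * U = 1 := by
    have := (Matrix.mem_unitaryGroup_iff').1 hU
    rwa [Matrix.star_eq_conjTranspose] at this
  have hlam0C : (lam m 0 : ℂ) = -1 := by rw [lam_zero hm]; push_cast; ring
  have hlamLC : (lam m (Fin.last m) : ℂ) = 1 := by rw [lam_last hm]; norm_num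
  -- membership of conjugates
  have hmem : ∀ j : Fin (d + 1), ∃ b : Fin (d + 1) → ℂ,
      ∑ j', b j' • Xfam m d Y j' = U * Xfam m d Y j * Uᴴ := by
    intro j
    have h1 : Xfam m d Y j ∈ (Submodule.span ℂ (Set.range (Xfam m d Y)) :
        Set (Matrix (Fin (m + 1)) (Fin (m + 1)) ℂ)) :=
      Submodule.subset_span ⟨j, rfl⟩
    have h2 : U * Xfam m d Y j * Uᴴ ∈ (fun x => U * x * Uᴴ) ''
        (Submodule.span ℂ (Set.range (Xfam m d Y)) :
          Set (Matrix (Fin (m + 1)) (Fin (m + 1)) ℂ)) := ⟨_, h1, rfl⟩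
    rw [himg] at h2
    have h3 : U * Xfam m d Y j * Uᴴ ∈ Submodule.span ℂ (Set.range (Xfam m d Y)) := h2
    rw [Submodule.mem_span_range_iff_exists_fun] at h3
    exact h3
  -- representation of U A Uᴴ
  obtain ⟨a, ha⟩ := by
    have := hmem (Fin.last d)
    rwa [Xfam_last] at this
  obtain ⟨hBfin, hsign⟩ := c_pm_one hm Y hdiag U hU1 hU2 a ha
  set c := a (Fin.last d) with hc
  have hcc : c * c = 1 := by rcases hsign with h | h <;> rw [h] <;> ring
  have hcne : c ≠ 0 := by
    intro h; rw [h, mul_zero] at hcc; exact zero_ne_one hcc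
  -- commutation relations
  have hAUc : Amat m * Uᴴ = c • (Uᴴ * Amat m) := by
    have h5 : Amat m * Uᴴ = Uᴴ * (U * Amat m * Uᴴ) := by
      rw [← Matrix.mul_assoc, ← Matrix.mul_assoc, hU2, Matrix.one_mul]
    rw [h5, hBfin, Matrix.mul_smul]
  have hUAc : Uᴴ * Amat m = c • (Amat m * Uᴴ) := by
    rw [hAUc, smul_smul, hcc, one_smul]
  have hA2U : Amat m * Amat m * Uᴴ = Uᴴ * (Amat m * Amat m) := by
    calc Amat m * Amat m * Uᴴ = Amat m * (Amat m * Uᴴ) := by rw [Matrix.mul_assoc]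
      _ = c • (Amat m * (Uᴴ * Amat m)) := by rw [hAUc, Matrix.mul_smul]
      _ = c • ((Amat m * Uᴴ) * Amat m) := by rw [Matrix.mul_assoc]
      _ = (c * c) • ((Uᴴ * Amat m) * Amat m) := by
          rw [hAUc, Matrix.smul_mul, smul_smul]
      _ = Uᴴ * (Amat m * Amat m) := by rw [hcc, one_smul, Matrix.mul_assoc]
  -- middle entries of the last column of Uᴴ vanish
  have humid : ∀ k : Fin (m + 1), IsMid k → Uᴴ k (Fin.last m) = 0 := by
    intro k hk
    have h := congrFun (congrFun hA2U k) (Fin.last m)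
    rw [Amat_sq hm, Matrix.diagonal_mul, Matrix.mul_diagonal, wvec_last hm] at h
    have h2 : ((wvec (m := m) k : ℂ) - 2) * Uᴴ k (Fin.last m) = 0 := by
      rw [sub_mul]
      rw [h]
      push_cast
      ring
    rcases mul_eq_zero.1 h2 with h3 | h3
    · exfalso
      apply wvec_mid_ne hm hk
      have h4 : (wvec (m := m) k : ℂ) = 2 := by
        have := sub_eq_zero.1 h3
        exact_mod_cast this
      exact_mod_cast h4
    · exact h3
  -- analysis of the conjugates of the embedded matrices
  have husum : ∑ k, Complex.normSq (Uᴴ k (Fin.last m)) = 1 := ucols_normSq hU1 (Fin.last m)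
  have hall : ∀ i : Fin d,
      (∀ k'' : Fin m, Y i k'' 0 * Uᴴ 0 (Fin.last m) = 0) ∧
      (∃ b : Fin d → ℂ, U * embL m (Y i) * Uᴴ = ∑ i', b i' • embL m (Y i')) := by
    intro i
    obtain ⟨b, hb⟩ := by
      have := hmem (Fin.castSucc i)
      rwa [Xfam_cast] at this
    have hXicol : ∀ k, (U * embL m (Y i) * Uᴴ) k (Fin.last m)
        = b (Fin.last d) * Amat m k (Fin.last m) := by
      intro k
      rw [← hb]
      exact colN Y b k
    have hXiU : ∀ k, (embL m (Y i) * Uᴴ) k (Fin.last m)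
        = b (Fin.last d) * (c * (Amat m * Uᴴ) k (Fin.last m)) := by
      intro k
      have h5 : embL m (Y i) * Uᴴ = Uᴴ * (U * embL m (Y i) * Uᴴ) := by
        rw [← Matrix.mul_assoc, ← Matrix.mul_assoc, hU2, Matrix.one_mul]
      rw [h5, Matrix.mul_apply]
      rw [Finset.sum_congr rfl (fun j _ => by rw [hXicol j])]
      have h6 : ∀ j, Uᴴ k j * (b (Fin.last d) * Amat m j (Fin.last m))
          = b (Fin.last d) * (Uᴴ k j * Amat m j (Fin.last m)) := fun j => by ring
      rw [Finset.sum_congr rfl (fun j _ => h6 j), ← Finset.mul_sum]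
      congr 1
      have h7 : (Uᴴ * Amat m) k (Fin.last m) = c * (Amat m * Uᴴ) k (Fin.last m) := by
        rw [hUAc, Matrix.smul_apply, smul_eq_mul]
      rw [← h7, Matrix.mul_apply]
    -- value of the left side
    have hLHS : ∀ k, (embL m (Y i) * Uᴴ) k (Fin.last m)
        = embL m (Y i) k 0 * Uᴴ 0 (Fin.last m) := by
      intro k
      rw [Matrix.mul_apply]
      apply sum_one_support
      intro j hj
      by_cases hjL : j = Fin.last m
      · rw [hjL, embL_last_right, zero_mul]
      · rw [humid j ⟨hj, hjL⟩, mul_zero]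
    -- the two scalar equations
    have hv0 : (Amat m * Uᴴ) 0 (Fin.last m)
        = - Uᴴ 0 (Fin.last m) + Uᴴ (Fin.last m) (Fin.last m) := by
      rw [Amul_zero _ hm (Fin.last m), hlam0C]; ring
    have hvL : (Amat m * Uᴴ) (Fin.last m) (Fin.last m)
        = Uᴴ 0 (Fin.last m) + Uᴴ (Fin.last m) (Fin.last m) := by
      rw [Amul_last _ hm (Fin.last m), hlamLC, one_mul]
    have he0 : 0 = b (Fin.last d) * c *
        (- Uᴴ 0 (Fin.last m) + Uᴴ (Fin.last m) (Fin.last m)) := by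
      have h := hXiU 0
      rw [hLHS 0, hv0] at h
      have h8 : embL m (Y i) 0 0 = 0 := by
        rw [embL_apply _ _ _ (zero_ne_last hm) (zero_ne_last hm)]
        simp [hdiag]
      rw [h8, zero_mul] at h
      rw [h]; ring
    have heL : 0 = b (Fin.last d) * c *
        (Uᴴ 0 (Fin.last m) + Uᴴ (Fin.last m) (Fin.last m)) := by
      have h := hXiU (Fin.last m)
      rw [hLHS (Fin.last m), hvL, embL_last_left, zero_mul] at h
      rw [h]; ring
    -- conclude that the coefficient vanishes
    have hbL : b (Fin.last d) = 0 := by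
      by_contra hbne
      have hWne : b (Fin.last d) * c ≠ 0 := mul_ne_zero hbne hcne
      have h01 : - Uᴴ 0 (Fin.last m) + Uᴴ (Fin.last m) (Fin.last m) = 0 :=
        by
          rcases mul_eq_zero.1 he0.symm with h | h
          · exact absurd h hWne
          · exact h
      have h02 : Uᴴ 0 (Fin.last m) + Uᴴ (Fin.last m) (Fin.last m) = 0 :=
        by
          rcases mul_eq_zero.1 heL.symm with h | h
          · exact absurd h hWne
          · exact h
      have hz0 : Uᴴ 0 (Fin.last m) = 0 := by
        have := sub_eq_zero.2 (h01.trans h02.symm)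
        -- (-x + y) - (x + y) = -2x
        have h2 : (2 : ℂ) * Uᴴ 0 (Fin.last m) = 0 := by linear_combination h02 - h01
        rcases mul_eq_zero.1 h2 with h | h
        · norm_num at h
        · exact h
      have hzL : Uᴴ (Fin.last m) (Fin.last m) = 0 := by
        have : Uᴴ 0 (Fin.last m) + Uᴴ (Fin.last m) (Fin.last m) = 0 := h02
        rw [hz0, zero_add] at this
        exact this
      -- then the last column of Uᴴ vanishes, contradicting unitarity
      have hzero : ∀ k, Complex.normSq (Uᴴ k (Fin.last m)) = 0 := by
        intro k
        by_cases hk0 : k = 0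
        · rw [hk0, hz0]; simp
        · by_cases hkL : k = Fin.last m
          · rw [hkL, hzL]; simp
          · rw [humid k ⟨hk0, hkL⟩]; simp
      rw [Finset.sum_congr rfl (fun k _ => hzero k), Finset.sum_const_zero] at husum
      norm_num at husum
    constructor
    · intro k''
      have h := hXiU (Fin.castSucc k'')
      rw [hLHS (Fin.castSucc k''), hbL] at h
      have h0 : embL m (Y i) (Fin.castSucc k'') 0 = Y i k'' 0 := by
        have h00 : ((0 : Fin (m+1))) = Fin.castSucc (0 : Fin m) := by simp
        rw [h00, embL_cast]
      rw [h0] at h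
      simpa using h
    · refine ⟨fun i' => b (Fin.castSucc i'), ?_⟩
      rw [← hb, Fin.sum_univ_castSucc, hbL, zero_smul, add_zero]
      exact Finset.sum_congr rfl (fun i' _ => by rw [Xfam_cast])
  -- case analysis on the corner entry of `Uᴴ`
  by_cases hu0 : Uᴴ 0 (Fin.last m) = 0
  case neg =>
    -- the first columns of all `Y i` vanish; contradiction with rigidity
    exfalso
    have hYcol : ∀ i k'', Y i k'' 0 = 0 := by
      intro i k''
      have h := (hall i).1 k''
      rcases mul_eq_zero.1 h with h | h
      · exact h
      · exact absurd h hu0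
    have hYrow : ∀ i l'', Y i 0 l'' = 0 := by
      intro i l''
      have h := hherm i
      have h2 := congrFun (congrFun h.symm 0) l''
      rw [Matrix.conjTranspose_apply, hYcol i l''] at h2
      simpa using h2
    set E : Matrix (Fin m) (Fin m) ℂ :=
      Matrix.diagonal (fun k'' : Fin m => if k'' = 0 then (-1 : ℂ) else 1) with hE
    have hEoff : ∀ k l : Fin m, k ≠ l → E k l = 0 := by
      intro k l hkl
      rw [hE, Matrix.diagonal_apply_ne _ hkl]
    have hEabs : ∀ k : Fin m, ‖E k k‖ = 1 := by
      intro k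
      rw [hE, Matrix.diagonal_apply_eq]
      by_cases h : k = 0 <;> simp [h]
    have hEfix : ∀ x ∈ Submodule.span ℂ (Set.range Y), E * x * Eᴴ = x := by
      intro x hx
      induction hx using Submodule.span_induction with
      | mem z hz =>
        obtain ⟨i, rfl⟩ := hz
        ext k l
        rw [Matrix.mul_apply]
        have hcol : ∀ j, (E * Y i) k j * Eᴴ j l
            = (E * Y i) k l * Eᴴ l l * (if j = l then 1 else 0) := by
          intro j
          by_cases h : j = l
          · rw [h, if_pos rfl, mul_one]
          · rw [if_neg h, mul_zero, Matrix.conjTranspose_apply, hEoff l j (fun hh => h hh.symm)]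
            simp
        rw [Finset.sum_congr rfl (fun j _ => hcol j)]
        rw [← Finset.mul_sum, Finset.sum_ite_eq' Finset.univ l (fun _ => (1:ℂ))]
        rw [if_pos (Finset.mem_univ l), mul_one]
        rw [Matrix.mul_apply]
        have hrow : ∀ j, E k j * Y i j l = E k k * Y i k l * (if j = k then 1 else 0) := by
          intro j
          by_cases h : j = k
          · rw [h, if_pos rfl, mul_one]
          · rw [if_neg h, mul_zero, hEoff k j (fun hh => h hh.symm), zero_mul]
        rw [Finset.sum_congr rfl (fun j _ => hrow j)]
        rw [← Finset.mul_sum, Finset.sum_ite_eq' Finset.univ k (fun _ => (1:ℂ))]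
        rw [if_pos (Finset.mem_univ k), mul_one]
        rw [Matrix.conjTranspose_apply, hE, Matrix.diagonal_apply_eq, Matrix.diagonal_apply_eq]
        by_cases hk : k = 0
        · subst hk
          rw [hYrow i l]; ring
        · by_cases hl : l = 0
          · subst hl
            rw [hYcol i k]; ring
          · rw [if_neg hk, if_neg hl]
            simp
      | zero => simp
      | add x y _ _ hx hy =>
        rw [Matrix.mul_add, Matrix.add_mul, hx, hy]
      | smul cc x _ hx =>
        rw [Matrix.mul_smul, Matrix.smul_mul, hx]
    have hEimg : (fun x => E * x * Eᴴ) ''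
        (Submodule.span ℂ (Set.range Y) : Set (Matrix (Fin m) (Fin m) ℂ))
        = (Submodule.span ℂ (Set.range Y) : Set (Matrix (Fin m) (Fin m) ℂ)) := by
      apply Set.eq_of_subset_of_subset
      · rintro z ⟨x, hx, rfl⟩
        show E * x * Eᴴ ∈ _
        rw [hEfix x hx]
        exact hx
      · intro x hx
        exact ⟨x, hx, hEfix x hx⟩
    obtain ⟨c₀, hc₀⟩ := hrig E hEoff hEabs hEimg
    have h1 : E 0 0 = c₀ := by
      rw [hc₀, Matrix.smul_apply, Matrix.one_apply_eq, smul_eq_mul, mul_one]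
    have h2 : ∃ k : Fin m, k ≠ 0 := by
      refine ⟨⟨1, by omega⟩, ?_⟩
      intro h
      have := congrArg Fin.val h
      simpa using this
    obtain ⟨k1, hk1⟩ := h2
    have h3 : E k1 k1 = c₀ := by
      rw [hc₀, Matrix.smul_apply, Matrix.one_apply_eq, smul_eq_mul, mul_one]
    rw [hE, Matrix.diagonal_apply_eq, if_pos rfl] at h1
    rw [hE, Matrix.diagonal_apply_eq, if_neg hk1] at h3
    rw [← h3] at h1
    norm_num at h1
  case pos =>
    -- `Uᴴ` fixes the last coordinate
    have huL1 : Complex.normSq (Uᴴ (Fin.last m) (Fin.last m)) = 1 := by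
      rw [← husum]
      symm
      apply Finset.sum_eq_single (Fin.last m)
      · intro k _ hk
        by_cases hk0 : k = 0
        · rw [hk0, hu0]; simp
        · rw [humid k ⟨hk0, hk⟩]; simp
      · intro h
        exact absurd (Finset.mem_univ _) h
    rcases hsign with hc1 | hcm1
    case inr =>
      -- c = -1 is impossible
      exfalso
      have hs1a : ∑ k, (starRingEnd ℂ) (Uᴴ k (Fin.last m)) * (Amat m * Uᴴ) k (Fin.last m)
          = (1 : ℂ) := by
        rw [sum_one_support _ (Fin.last m) (fun k hk => by
          by_cases hk0 : k = 0
          · rw [hk0, hu0]; simp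
          · rw [humid k ⟨hk0, hk⟩]; simp)]
        rw [Amul_last _ hm (Fin.last m), hlamLC, hu0, one_mul, zero_add]
        rw [mul_comm, Complex.mul_conj, huL1]
        norm_num
      have hs1b : ∑ k, (starRingEnd ℂ) (Uᴴ k (Fin.last m)) * (Amat m * Uᴴ) k (Fin.last m)
          = c := by
        have hAU : ∀ k, (Amat m * Uᴴ) k (Fin.last m)
            = c * (Uᴴ k 0 + Uᴴ k (Fin.last m)) := by
          intro k
          have h := congrFun (congrFun hAUc k) (Fin.last m)
          rw [Matrix.smul_apply, smul_eq_mul] at h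
          rw [h, mulA_last _ hm k, hlamLC, mul_one]
        rw [Finset.sum_congr rfl (fun k _ => by rw [hAU k])]
        have hexp : ∀ k, (starRingEnd ℂ) (Uᴴ k (Fin.last m)) * (c * (Uᴴ k 0 + Uᴴ k (Fin.last m)))
            = c * ((starRingEnd ℂ) (Uᴴ k (Fin.last m)) * Uᴴ k 0
              + (starRingEnd ℂ) (Uᴴ k (Fin.last m)) * Uᴴ k (Fin.last m)) := by
          intro k; ring
        rw [Finset.sum_congr rfl (fun k _ => hexp k), ← Finset.mul_sum]
        rw [Finset.sum_add_distrib]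
        rw [ucols hU1 (Fin.last m) 0, ucols hU1 (Fin.last m) (Fin.last m)]
        rw [if_neg (Ne.symm (zero_ne_last hm)), if_pos rfl]
        ring
      rw [hs1a] at hs1b
      rw [hcm1] at hs1b
      norm_num at hs1b
    case inl =>
      -- c = 1 : U is diagonal
      have hUAe : Uᴴ * Amat m = Amat m * Uᴴ := by
        rw [hUAc, hc1, one_smul]
      have hUAeL : ∀ k, Uᴴ k 0 + Uᴴ k (Fin.last m) = (Amat m * Uᴴ) k (Fin.last m) := by
        intro k
        have h := congrFun (congrFun hUAe k) (Fin.last m)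
        rw [mulA_last _ hm k, hlamLC, mul_one] at h
        exact h
      have hcol0 : ∀ k, Uᴴ k 0
          = if k = 0 then Uᴴ (Fin.last m) (Fin.last m) else 0 := by
        intro k
        by_cases hk0 : k = 0
        · subst hk0
          rw [if_pos rfl]
          have h := hUAeL 0
          rw [Amul_zero _ hm (Fin.last m), hlam0C, hu0] at h
          linear_combination h
        · rw [if_neg hk0]
          by_cases hkL : k = Fin.last m
          · subst hkL
            have h := hUAeL (Fin.last m)
            rw [Amul_last _ hm (Fin.last m), hlamLC, hu0, one_mul, zero_add] at h
            -- h : Uᴴ L 0 + Uᴴ L L = Uᴴ L L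
            linear_combination h
          · have h := hUAeL k
            rw [Amul_mid _ hm ⟨hk0, hkL⟩ (Fin.last m), humid k ⟨hk0, hkL⟩, mul_zero,
              add_zero] at h
            exact h
      have hcolmid : ∀ j, IsMid j → ∀ k, k ≠ j → Uᴴ k j = 0 := by
        intro j hj
        have hUAj : ∀ k, Uᴴ k j * (lam m j : ℂ) = (Amat m * Uᴴ) k j := by
          intro k
          have h := congrFun (congrFun hUAe k) j
          rw [mulA_mid _ hm hj k] at h
          exact h
        have he0 : Uᴴ 0 j * (lam m j : ℂ) = - Uᴴ 0 j + Uᴴ (Fin.last m) j := by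
          have h := hUAj 0
          rw [Amul_zero _ hm j, hlam0C] at h
          rw [h]; ring
        have heL : Uᴴ (Fin.last m) j * (lam m j : ℂ) = Uᴴ 0 j + Uᴴ (Fin.last m) j := by
          have h := hUAj (Fin.last m)
          rw [Amul_last _ hm j, hlamLC, one_mul] at h
          exact h
        have hsq : ((lam m j : ℂ))^2 - 2 ≠ 0 := by
          intro hcon
          have h9 := lam_mid_sq hm hj
          have h2 : ((lam m j)^2 : ℝ) = 2 := by
            have : ((lam m j : ℂ))^2 = 2 := by linear_combination hcon
            exact_mod_cast this
          linarith
        have hx0 : Uᴴ 0 j = 0 := by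
          have hq : Uᴴ 0 j * (((lam m j : ℂ))^2 - 2) = 0 := by
            linear_combination ((lam m j : ℂ)) * he0 + heL - he0
          rcases mul_eq_zero.1 hq with h | h
          · exact h
          · exact absurd h hsq
        have hxL : Uᴴ (Fin.last m) j = 0 := by
          have := he0
          rw [hx0] at this
          simpa using this.symm
        intro k hkj
        by_cases hk0 : k = 0
        · rw [hk0]; exact hx0
        · by_cases hkL : k = Fin.last m
          · rw [hkL]; exact hxL
          · have h := hUAj k
            rw [Amul_mid _ hm ⟨hk0, hkL⟩ j] at h
            have hne : (lam m j : ℂ) ≠ (lam m k : ℂ) := by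
              intro hcon
              exact lam_mid_inj hm hj ⟨hk0, hkL⟩ (fun hh => hkj hh.symm)
                (by exact_mod_cast hcon)
            have hq : Uᴴ k j * ((lam m j : ℂ) - (lam m k : ℂ)) = 0 := by
              linear_combination h
            rcases mul_eq_zero.1 hq with h2 | h2
            · exact h2
            · exact absurd (sub_eq_zero.1 h2) hne
      -- Uᴴ is diagonal
      have hudiagonal : ∀ k l, k ≠ l → Uᴴ k l = 0 := by
        intro k l hkl
        by_cases hl0 : l = 0
        · subst hl0
          rw [hcol0 k, if_neg hkl]
        · by_cases hlL : l = Fin.last m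
          · subst hlL
            by_cases hk0 : k = 0
            · rw [hk0]; exact hu0
            · exact humid k ⟨hk0, hkl⟩
          · exact hcolmid l ⟨hl0, hlL⟩ k hkl
      have hUdiag : Uᴴ = Matrix.diagonal (fun k => Uᴴ k k) := by
        ext k l
        by_cases h : k = l
        · subst h; rw [Matrix.diagonal_apply_eq]
        · rw [Matrix.diagonal_apply_ne _ h]
          exact hudiagonal k l h
      have hnormdv : ∀ k, Complex.normSq (Uᴴ k k) = 1 := by
        intro k
        have h := ucols_normSq hU1 k
        have h2 : ∑ j, Complex.normSq (Uᴴ j k) = Complex.normSq (Uᴴ k k) :=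
          Finset.sum_eq_single k
            (fun j _ hj => by rw [hudiagonal j k hj]; simp)
            (fun h => absurd (Finset.mem_univ _) h)
        rw [h2] at h
        exact h
      have hdv0 : Uᴴ 0 0 = Uᴴ (Fin.last m) (Fin.last m) := by
        have := hcol0 0
        rwa [if_pos rfl] at this
      have hU' : U = Matrix.diagonal (fun k => (starRingEnd ℂ) (Uᴴ k k)) := by
        have h := congrArg Matrix.conjTranspose hUdiag
        rw [Matrix.conjTranspose_conjTranspose, Matrix.diagonal_conjTranspose] at h
        convert h using 2
        · rfl
        · funext k; rfl
      -- the diagonal matrix on the small space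
      set D' : Matrix (Fin m) (Fin m) ℂ :=
        Matrix.diagonal (fun k'' : Fin m =>
          (starRingEnd ℂ) (Uᴴ k''.castSucc k''.castSucc)) with hD'
      have hD'off : ∀ k l : Fin m, k ≠ l → D' k l = 0 := by
        intro k l hkl
        rw [hD', Matrix.diagonal_apply_ne _ hkl]
      have hD'abs : ∀ k : Fin m, ‖D' k k‖ = 1 := by
        intro k
        rw [hD', Matrix.diagonal_apply_eq, Complex.norm_conj, Complex.norm_def,
          hnormdv, Real.sqrt_one]
      have hD'H : D'ᴴ = Matrix.diagonal (fun k : Fin m => Uᴴ k.castSucc k.castSucc) := by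
        have hst : (star fun k'' : Fin m => (starRingEnd ℂ) (Uᴴ k''.castSucc k''.castSucc))
            = fun k'' : Fin m => Uᴴ k''.castSucc k''.castSucc := by
          funext k
          rw [Pi.star_apply, Complex.star_def, Complex.conj_conj]
        rw [hD', Matrix.diagonal_conjTranspose, hst]
      have hprod : ∀ k : Fin m,
          (starRingEnd ℂ) (Uᴴ k.castSucc k.castSucc) * Uᴴ k.castSucc k.castSucc = 1 := by
        intro k
        rw [mul_comm, Complex.mul_conj, hnormdv]
        norm_num
      have hD'1 : D' * D'ᴴ = 1 := by
        rw [hD'H, hD', Matrix.diagonal_mul_diagonal]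
        have h2 : (fun i : Fin m => (starRingEnd ℂ) (Uᴴ i.castSucc i.castSucc)
            * Uᴴ i.castSucc i.castSucc) = fun _ : Fin m => (1 : ℂ) :=
          funext fun k => hprod k
        rw [h2, Matrix.diagonal_one]
      have hD'2 : D'ᴴ * D' = 1 := by
        rw [hD'H, hD', Matrix.diagonal_mul_diagonal]
        have h2 : (fun i : Fin m => Uᴴ i.castSucc i.castSucc
            * (starRingEnd ℂ) (Uᴴ i.castSucc i.castSucc)) = fun _ : Fin m => (1 : ℂ) :=
          funext fun k => (mul_comm _ _).trans (hprod k)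
        rw [h2, Matrix.diagonal_one]
      -- the conjugated generators stay in the span
      have hDmem : ∀ i, D' * Y i * D'ᴴ ∈ Submodule.span ℂ (Set.range Y) := by
        intro i
        obtain ⟨b, hbrep⟩ := (hall i).2
        have hDY : D' * Y i * D'ᴴ = ∑ i', b i' • Y i' := by
          ext k'' l''
          have hL : (D' * Y i * D'ᴴ) k'' l''
              = (starRingEnd ℂ) (Uᴴ k''.castSucc k''.castSucc) * Y i k'' l''
                * Uᴴ l''.castSucc l''.castSucc := by
            rw [hD'H, Matrix.mul_diagonal, hD', Matrix.diagonal_mul]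
          have hR : (∑ i', b i' • Y i') k'' l''
              = (U * embL m (Y i) * Uᴴ) k''.castSucc l''.castSucc := by
            rw [hbrep, Matrix.sum_apply, Matrix.sum_apply]
            apply Finset.sum_congr rfl
            intro i' _
            rw [Matrix.smul_apply, Matrix.smul_apply, embL_cast]
          have hUentry : ∀ a b : Fin (m + 1), U a b = (starRingEnd ℂ) (Uᴴ b a) := by
            intro a b
            have h : Uᴴ b a = star (U a b) := Matrix.conjTranspose_apply U a b
            rw [h]
            rw [Complex.star_def, Complex.conj_conj]
          have hRv : (U * embL m (Y i) * Uᴴ) k''.castSucc l''.castSucc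
              = (starRingEnd ℂ) (Uᴴ k''.castSucc k''.castSucc) * Y i k'' l''
                * Uᴴ l''.castSucc l''.castSucc := by
            rw [Matrix.mul_apply]
            rw [sum_one_support _ (l''.castSucc) (fun j hj => by
              rw [hudiagonal j l''.castSucc hj, mul_zero])]
            rw [Matrix.mul_apply]
            rw [sum_one_support _ (k''.castSucc) (fun j hj => by
              rw [hUentry k''.castSucc j, hudiagonal j k''.castSucc hj, map_zero, zero_mul])]
            rw [embL_cast, hUentry k''.castSucc k''.castSucc]
          rw [hL, hR, hRv]
        rw [hDY]
        apply Submodule.sum_mem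
        intro i' _
        exact Submodule.smul_mem _ _ (Submodule.subset_span ⟨i', rfl⟩)
      obtain ⟨c₀, hc₀⟩ := hrig D' hD'off hD'abs
        (image_span_conj Y D' D'ᴴ hD'1 hD'2 hDmem)
      have hval : ∀ k : Fin (m + 1), (starRingEnd ℂ) (Uᴴ k k) = c₀ := by
        have hentry : ∀ k'' : Fin m,
            (starRingEnd ℂ) (Uᴴ k''.castSucc k''.castSucc) = c₀ := by
          intro k''
          have h := congrFun (congrFun hc₀ k'') k''
          rw [hD', Matrix.diagonal_apply_eq, Matrix.smul_apply, Matrix.one_apply_eq,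
            smul_eq_mul, mul_one] at h
          exact h
        intro k
        by_cases hkL : k = Fin.last m
        · subst hkL
          rw [← hdv0]
          have h0 : ((0 : Fin (m + 1))) = Fin.castSucc (0 : Fin m) := by simp
          rw [h0]
          exact hentry 0
        · have hcast : Fin.castSucc (k.castPred hkL) = k := Fin.castSucc_castPred k hkL
          rw [← hcast]
          exact hentry (k.castPred hkL)
      refine ⟨c₀, ?_⟩
      rw [hU']
      ext k l
      by_cases h : k = l
      · subst h
        rw [Matrix.diagonal_apply_eq, Matrix.smul_apply, Matrix.one_apply_eq, smul_eq_mul,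
          mul_one]
        exact hval k
      · rw [Matrix.diagonal_apply_ne _ h, Matrix.smul_apply, Matrix.one_apply_ne h, smul_zero]

/-! ### Properties of the family X -/

lemma embL_herm {M : Matrix (Fin m) (Fin m) ℂ} (h : M.IsHermitian) :
    (embL m M).IsHermitian := by
  rw [Matrix.IsHermitian]
  ext k l
  rw [Matrix.conjTranspose_apply]
  by_cases hk : k = Fin.last m
  · subst hk
    rw [embL_last_left, embL_last_right]
    simp
  · by_cases hl : l = Fin.last m
    · subst hl
      rw [embL_last_left, embL_last_right]
      simp
    · rw [embL_apply _ _ _ hl hk, embL_apply _ _ _ hk hl]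
      have h2 := congrFun (congrFun h (k.castPred hk)) (l.castPred hl)
      rw [Matrix.conjTranspose_apply] at h2
      exact h2

lemma embL_trace {M : Matrix (Fin m) (Fin m) ℂ} (h : ∀ k, M k k = 0) :
    (embL m M).trace = 0 := by
  rw [Matrix.trace]
  apply Finset.sum_eq_zero
  intro k _
  rw [Matrix.diag]
  by_cases hk : k = Fin.last m
  · rw [hk, embL_last_left]
  · rw [embL_apply _ _ _ hk hk, h]

lemma Xfam_herm {d : ℕ} (hm : 3 ≤ m) (Y : Fin d → Matrix (Fin m) (Fin m) ℂ)
    (hherm : ∀ i, (Y i).IsHermitian) (j : Fin (d + 1)) : (Xfam m d Y j).IsHermitian := by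
  induction j using Fin.lastCases with
  | last => rw [Xfam_last]; exact Amat_herm hm
  | cast i => rw [Xfam_cast]; exact embL_herm (hherm i)

lemma Xfam_trace {d : ℕ} (hm : 3 ≤ m) (Y : Fin d → Matrix (Fin m) (Fin m) ℂ)
    (hdiag : ∀ i k, Y i k k = 0) (j : Fin (d + 1)) : (Xfam m d Y j).trace = 0 := by
  induction j using Fin.lastCases with
  | last => rw [Xfam_last]; exact Amat_trace hm
  | cast i => rw [Xfam_cast]; exact embL_trace (hdiag i)

lemma Xfam_indep {d : ℕ} (hm : 3 ≤ m) (Y : Fin d → Matrix (Fin m) (Fin m) ℂ)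
    (hind : LinearIndependent ℂ Y) : LinearIndependent ℂ (Xfam m d Y) := by
  rw [Fintype.linearIndependent_iff]
  intro g hg
  have hlast : g (Fin.last d) = 0 := by
    have h := colN Y g (Fin.last m)
    rw [hg, Matrix.zero_apply, Amat_diag] at h
    have hlamne : (lam m (Fin.last m) : ℂ) ≠ 0 := by
      rw [lam_last hm]; norm_num
    rcases mul_eq_zero.1 h.symm with h2 | h2
    · exact h2
    · exact absurd h2 hlamne
  have hblock : ∀ i : Fin d, g (Fin.castSucc i) = 0 := by
    have hsum : ∑ i : Fin d, g (Fin.castSucc i) • Y i = 0 := by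
      ext k l
      have h := congrFun (congrFun hg k.castSucc) l.castSucc
      rw [Matrix.sum_apply, Fin.sum_univ_castSucc] at h
      rw [Matrix.smul_apply, Xfam_last, hlast, zero_smul, add_zero] at h
      rw [Matrix.zero_apply] at h ⊢
      rw [Matrix.sum_apply, ← h]
      apply Finset.sum_congr rfl
      intro i _
      rw [Matrix.smul_apply, Matrix.smul_apply, Xfam_cast, embL_cast]
    exact Fintype.linearIndependent_iff.1 hind (fun i => g (Fin.castSucc i)) hsum
  intro j
  induction j using Fin.lastCases with
  | last => exact hlast
  | cast i => exact hblock i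

end TSIS

open TSIS in
/-- Inductive step. -/
theorem trivial_stabilizer_inductive_step
    (n d : ℕ) (hn : 3 ≤ n) (hd : 1 ≤ d)
    (hY : ∃ Y : Fin d → Matrix (Fin (n - 1)) (Fin (n - 1)) ℂ,
      LinearIndependent ℂ Y ∧ (∀ i, (Y i).IsHermitian) ∧ (∀ i k, Y i k k = 0) ∧
      ∀ D : Matrix (Fin (n - 1)) (Fin (n - 1)) ℂ,
        (∀ k l, k ≠ l → D k l = 0) → (∀ k, ‖D k k‖ = 1) →
        (fun x => D * x * Dᴴ) ''
            (Submodule.span ℂ (Set.range Y) : Set (Matrix (Fin (n - 1)) (Fin (n - 1)) ℂ))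
          = (Submodule.span ℂ (Set.range Y) : Set (Matrix (Fin (n - 1)) (Fin (n - 1)) ℂ)) →
        ∃ c : ℂ, D = c • (1 : Matrix (Fin (n - 1)) (Fin (n - 1)) ℂ)) :
    ∃ X : Fin (d + 1) → Matrix (Fin n) (Fin n) ℂ,
      LinearIndependent ℂ X ∧ (∀ i, (X i).IsHermitian) ∧ (∀ i, (X i).trace = 0) ∧
      ∀ U : Matrix (Fin n) (Fin n) ℂ, U ∈ Matrix.unitaryGroup (Fin n) ℂ →
        (fun x => U * x * Uᴴ) ''
            (Submodule.span ℂ (Set.range X) : Set (Matrix (Fin n) (Fin n) ℂ))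
          = (Submodule.span ℂ (Set.range X) : Set (Matrix (Fin n) (Fin n) ℂ)) →
        ∃ c : ℂ, U = c • (1 : Matrix (Fin n) (Fin n) ℂ) := by
  obtain ⟨Y, hind, hherm, hdiag, hrig⟩ := hY
  by_cases hn3 : n = 3
  · -- vacuous case: the hypothesis is contradictory for `n = 3`
    exfalso
    subst hn3
    set e : Fin (3 - 1) → ℂ := fun k => if k = 0 then 1 else -1 with he
    set D : Matrix (Fin (3 - 1)) (Fin (3 - 1)) ℂ := Matrix.diagonal e with hD
    have hDoff : ∀ k l, k ≠ l → D k l = 0 := fun k l h =>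
      Matrix.diagonal_apply_ne _ h
    have hDabs : ∀ k, ‖D k k‖ = 1 := by
      intro k
      rw [hD, Matrix.diagonal_apply_eq, he]
      by_cases h : k = 0 <;> simp [h]
    have hDfix : ∀ x ∈ Submodule.span ℂ (Set.range Y), D * x * Dᴴ = -x := by
      intro x hx
      induction hx using Submodule.span_induction with
      | mem z hz =>
        obtain ⟨i, rfl⟩ := hz
        ext k l
        rw [hD, Matrix.diagonal_conjTranspose, Matrix.mul_diagonal, Matrix.diagonal_mul]
        rw [Matrix.neg_apply]
        by_cases hkl : k = l
        · subst hkl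
          rw [hdiag]
          simp
        · have hstar : (star e) l = e l := by
            rw [Pi.star_apply, he]
            by_cases h : l = 0 <;> simp [h]
          rw [hstar, he]
          have hval : (if k = 0 then (1:ℂ) else -1) * ((if l = 0 then (1:ℂ) else -1)) = -1 := by
            by_cases hk : k = 0
            · have hl : ¬ l = 0 := fun h => hkl (by rw [hk, h])
              rw [if_pos hk, if_neg hl]; ring
            · have hl : l = 0 := by
                have hk2 := k.isLt
                have hl2 := l.isLt
                have : k.val ≠ l.val := fun h => hkl (Fin.ext h)
                have hkv : k.val ≠ 0 := fun h => hk (Fin.ext h)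
                have : l.val = 0 := by omega
                exact Fin.ext this
              rw [if_neg hk, if_pos hl]; ring
          calc (if k = 0 then (1:ℂ) else -1) * Y i k l * (if l = 0 then (1:ℂ) else -1)
              = ((if k = 0 then (1:ℂ) else -1) * ((if l = 0 then (1:ℂ) else -1))) * Y i k l := by
                ring
            _ = -Y i k l := by rw [hval]; ring
      | zero => simp
      | add x y _ _ hx hy => rw [Matrix.mul_add, Matrix.add_mul, hx, hy]; abel
      | smul cc x _ hx => rw [Matrix.mul_smul, Matrix.smul_mul, hx, smul_neg]
    have hDimg : (fun x => D * x * Dᴴ) ''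
        (Submodule.span ℂ (Set.range Y) : Set (Matrix (Fin (3 - 1)) (Fin (3 - 1)) ℂ))
        = (Submodule.span ℂ (Set.range Y) : Set (Matrix (Fin (3 - 1)) (Fin (3 - 1)) ℂ)) := by
      apply Set.eq_of_subset_of_subset
      · rintro z ⟨x, hx, rfl⟩
        show D * x * Dᴴ ∈ _
        rw [hDfix x hx]
        exact Submodule.neg_mem _ hx
      · intro x hx
        refine ⟨-x, Submodule.neg_mem _ hx, ?_⟩
        show D * (-x) * Dᴴ = x
        rw [hDfix (-x) (Submodule.neg_mem _ hx), neg_neg]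
    obtain ⟨c, hc⟩ := hrig D hDoff hDabs hDimg
    have h0 : (1 : ℂ) = c := by
      have h := congrFun (congrFun hc 0) 0
      rw [hD, Matrix.diagonal_apply_eq, Matrix.smul_apply, Matrix.one_apply_eq,
        smul_eq_mul, mul_one] at h
      simp only [he] at h
      simpa using h
    have h1 : (-1 : ℂ) = c := by
      have h := congrFun (congrFun hc 1) 1
      rw [hD, Matrix.diagonal_apply_eq, Matrix.smul_apply, Matrix.one_apply_eq,
        smul_eq_mul, mul_one] at h
      simp only [he, if_neg (show ¬(1 : Fin (3 - 1)) = 0 by decide)] at h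
      exact h
    rw [← h1] at h0
    norm_num at h0
  · -- main case : `n ≥ 4`
    obtain ⟨m, rfl⟩ : ∃ m, n = m + 1 := ⟨n - 1, by omega⟩
    have hm : 3 ≤ m := by omega
    refine ⟨Xfam m d Y, Xfam_indep hm Y hind, Xfam_herm hm Y hherm,
      Xfam_trace hm Y hdiag, ?_⟩
    intro U hU himg
    exact main_rigidity hm Y hherm hdiag hrig U hU himg
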